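/- Let V be a countable-dimensional complex vector space with a quaternionic structure J (an antilinear automorphism with J² = −id). A chain {0 ⊂ F ⊂ V} with F a proper nonzero subspace is pseudo-quaternionic in the sense that F ∩ J(F) is not properly contained in F̃ ∩ J(F̃) for any subspace F̃ with dim F̃ = dim F and F̃ commensurable with F, if and only if the codimension of F ∩ J(F) in F is at most 1. -/

import Mathlib

open Module

universe u

/-- A finite-dimensional complex vector space with a quaternionic structure has even
complex dimension. -/
private lemma even_finrank_aux :
    ∀ (n : ℕ) (W : Type u) [AddCommGroup W] [Module ℂ W] [FiniteDimensional ℂ W]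
      (J : W →ₛₗ[starRingEnd ℂ] W), (∀ x, J (J x) = -x) → finrank ℂ W = n → Even n := by
  intro n
  induction n using Nat.strong_induction_on with
  | _ n ih =>
    intro W _ _ _ J hJ hn
    rcases Nat.eq_zero_or_pos n with h0 | hpos
    · simp [h0]
    have hW : 0 < finrank ℂ W := hn ▸ hpos
    have : Nontrivial W := Module.nontrivial_of_finrank_pos hW
    obtain ⟨x, hx0⟩ := exists_ne (0 : W)
    -- x and J x are linearly independent
    have hind : LinearIndependent ℂ ![x, J x] := by
      rw [LinearIndependent.pair_iff' hx0]
      intro a ha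
      have h1 : J (J x) = (starRingEnd ℂ a * a) • x := by
        rw [← ha, map_smulₛₗ, ← ha, smul_smul]
      rw [hJ] at h1
      have h2 : (starRingEnd ℂ a * a + 1) • x = 0 := by
        rw [add_smul, one_smul, ← h1]; abel
      have h3 : starRingEnd ℂ a * a + 1 = 0 := by
        by_contra hc
        exact hx0 (by simpa [hc] using (smul_eq_zero.mp h2))
      have h4 : (Complex.normSq a : ℂ) + 1 = 0 := by
        rwa [Complex.normSq_eq_conj_mul_self]
      have h5 := congrArg Complex.re h4
      simp at h5
      nlinarith [Complex.normSq_nonneg a, h5]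
    set P : Submodule ℂ W := Submodule.span ℂ {x, J x} with hP
    have hxP : x ∈ P := Submodule.subset_span (by simp)
    have hJxP : J x ∈ P := Submodule.subset_span (by simp)
    have hPrank : finrank ℂ P = 2 := by
      have : ({x, J x} : Set W) = Set.range ![x, J x] := by
        simp [Matrix.range_cons, Matrix.range_empty, Set.insert_comm]
        ext y; simp [or_comm]
      rw [hP, this, finrank_span_eq_card hind]
      simp
    have hPinv : ∀ y ∈ P, J y ∈ P := by
      intro y hy
      induction hy using Submodule.span_induction with
      | mem z hz =>
          rcases hz with rfl | rfl
          · exact hJxP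
          · rw [hJ]; exact P.neg_mem hxP
      | zero => simpa using P.zero_mem
      | add a b _ _ ha hb => rw [map_add]; exact P.add_mem ha hb
      | smul c a _ ha => rw [map_smulₛₗ]; exact P.smul_mem _ ha
    -- the quotient
    set J' : (W ⧸ P) →ₛₗ[starRingEnd ℂ] (W ⧸ P) := P.mapQ P J (fun y hy => hPinv y hy) with hJ'
    have hJ'sq : ∀ z : W ⧸ P, J' (J' z) = -z := by
      intro z
      obtain ⟨y, rfl⟩ := Submodule.Quotient.mk_surjective P z
      rw [hJ', Submodule.mapQ_apply, Submodule.mapQ_apply, hJ]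
      rfl
    have hq : finrank ℂ (W ⧸ P) + finrank ℂ P = finrank ℂ W :=
      Submodule.finrank_quotient_add_finrank P
    have h2n : 2 ≤ n := by
      have := Submodule.finrank_mono (le_top : P ≤ ⊤)
      rw [finrank_top] at this
      omega
    have hqn : finrank ℂ (W ⧸ P) = n - 2 := by omega
    have heven := ih (n - 2) (by omega) (W ⧸ P) J' hJ'sq hqn
    obtain ⟨r, hr⟩ := heven
    exact ⟨r + 1, by omega⟩

private lemma even_finrank_inv {V : Type u} [AddCommGroup V] [Module ℂ V]
    [FiniteDimensional ℂ V] (J : V →ₛₗ[starRingEnd ℂ] V) (hJ : ∀ x, J (J x) = -x)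
    (W : Submodule ℂ V) (hW : ∀ x ∈ W, J x ∈ W) : Even (finrank ℂ W) := by
  refine even_finrank_aux (finrank ℂ W) W
    (LinearMap.codRestrict W (J.domRestrict W) (fun c => hW c c.2)) ?_ rfl
  intro y
  apply Subtype.ext
  exact hJ y

/-- Any submodule can be enlarged to any dimension up to `finrank ℂ V`. -/
private lemma exists_ext {V : Type u} [AddCommGroup V] [Module ℂ V] [FiniteDimensional ℂ V]
    (k : ℕ) (p : Submodule ℂ V) (h1 : finrank ℂ p ≤ k) (h2 : k ≤ finrank ℂ V) :
    ∃ q : Submodule ℂ V, p ≤ q ∧ finrank ℂ q = k := by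
  suffices H : ∀ d (p : Submodule ℂ V), finrank ℂ p + d = k → ∃ q, p ≤ q ∧ finrank ℂ q = k by
    exact H (k - finrank ℂ p) p (by omega)
  intro d
  induction d with
  | zero => intro p hp; exact ⟨p, le_rfl, by omega⟩
  | succ d ih =>
    intro p hp
    have hlt : finrank ℂ p < finrank ℂ V := by omega
    have hne : p ≠ ⊤ := by
      intro h; rw [h, finrank_top] at hlt; omega
    obtain ⟨x, hxp⟩ : ∃ x, x ∉ p := by
      by_contra hc
      push_neg at hc
      exact hne (Submodule.eq_top_iff'.mpr hc)
    have hx0 : x ≠ 0 := fun h => hxp (h ▸ p.zero_mem)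
    have hdisj : p ⊓ (ℂ ∙ x) = ⊥ :=
      disjoint_iff.mp ((Submodule.disjoint_span_singleton' hx0).mpr hxp)
    have hrank : finrank ℂ (p ⊔ (ℂ ∙ x) : Submodule ℂ V) = finrank ℂ p + 1 := by
      have := Submodule.finrank_sup_add_finrank_inf_eq p (ℂ ∙ x)
      rw [hdisj, finrank_bot, finrank_span_singleton hx0] at this
      omega
    obtain ⟨q, hq1, hq2⟩ := ih (p ⊔ (ℂ ∙ x)) (by omega)
    exact ⟨q, le_trans le_sup_left hq1, hq2⟩

theorem pseudo_quaternionic_iff_codim_le_one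
    {V : Type*} [AddCommGroup V] [Module ℂ V] [FiniteDimensional ℂ V]
    (m : ℕ) (hdim : finrank ℂ V = 2 * m)
    (J : V →ₛₗ[starRingEnd ℂ] V) (hJ : ∀ x : V, J (J x) = -x)
    (F : Submodule ℂ V) (hF0 : F ≠ ⊥) (hFV : F ≠ ⊤) :
    (∀ F' : Submodule ℂ V, finrank ℂ F' = finrank ℂ F →
      ¬ (F ⊓ Submodule.map J F < F' ⊓ Submodule.map J F')) ↔
    finrank ℂ F ≤ finrank ℂ (F ⊓ Submodule.map J F : Submodule ℂ V) + 1 := by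
  -- J-invariance of `G ⊓ J(G)` for any `G`
  have hinv : ∀ G : Submodule ℂ V, ∀ y ∈ G ⊓ Submodule.map J G, J y ∈ G ⊓ Submodule.map J G := by
    intro G y hy
    obtain ⟨hyG, z, hzG, hzy⟩ := hy
    refine ⟨?_, Submodule.mem_map_of_mem hyG⟩
    have : J y = -z := by rw [← hzy, hJ]
    rw [this]; exact G.neg_mem hzG
  constructor
  · -- maximality implies codimension ≤ 1
    intro h
    by_contra hlt
    push_neg at hlt
    set W : Submodule ℂ V := F ⊓ Submodule.map J F with hWdef
    set k := finrank ℂ F with hk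
    -- pick x ∈ F \ W
    have hWF : W < F := lt_of_le_of_ne inf_le_left (by
      intro he
      rw [he] at hlt
      omega)
    obtain ⟨x, hxF, hxW⟩ := SetLike.exists_of_lt hWF
    -- the J-invariant enlargement
    set F₀ : Submodule ℂ V := W ⊔ ((ℂ ∙ x) ⊔ (ℂ ∙ J x)) with hF₀def
    have hxF₀ : x ∈ F₀ :=
      Submodule.mem_sup_right (Submodule.mem_sup_left (Submodule.mem_span_singleton_self x))
    have hJxF₀ : J x ∈ F₀ :=
      Submodule.mem_sup_right (Submodule.mem_sup_right (Submodule.mem_span_singleton_self _))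
    have hWF₀ : W ≤ F₀ := le_sup_left
    have hF₀inv : ∀ y ∈ F₀, J y ∈ F₀ := by
      intro y hy
      rw [hF₀def] at hy
      obtain ⟨w, hw, u, hu, rfl⟩ := Submodule.mem_sup.mp hy
      obtain ⟨a, ha, b, hb, rfl⟩ := Submodule.mem_sup.mp hu
      obtain ⟨s, rfl⟩ := Submodule.mem_span_singleton.mp ha
      obtain ⟨t, rfl⟩ := Submodule.mem_span_singleton.mp hb
      rw [map_add, map_add, map_smulₛₗ, map_smulₛₗ, hJ]
      refine Submodule.add_mem _ (hWF₀ (hinv F _ hw)) (Submodule.add_mem _ ?_ ?_)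
      · exact Submodule.smul_mem _ _ hJxF₀
      · exact Submodule.smul_mem _ _ (Submodule.neg_mem _ hxF₀)
    have hF₀rank : finrank ℂ F₀ ≤ k := by
      calc finrank ℂ F₀ ≤ finrank ℂ W + finrank ℂ ((ℂ ∙ x) ⊔ (ℂ ∙ J x) : Submodule ℂ V) :=
            Submodule.finrank_add_le_finrank_add_finrank _ _
        _ ≤ finrank ℂ W + (finrank ℂ (ℂ ∙ x : Submodule ℂ V)
              + finrank ℂ (ℂ ∙ J x : Submodule ℂ V)) := by
            exact Nat.add_le_add_left (Submodule.finrank_add_le_finrank_add_finrank _ _) _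
        _ ≤ finrank ℂ W + 2 := by
            have h1 : finrank ℂ (ℂ ∙ x : Submodule ℂ V) ≤ 1 := by
              simpa using finrank_span_le_card ({x} : Set V)
            have h2 : finrank ℂ (ℂ ∙ J x : Submodule ℂ V) ≤ 1 := by
              simpa using finrank_span_le_card ({J x} : Set V)
            omega
        _ ≤ k := by omega
    obtain ⟨F', hF₀F', hF'rank⟩ := exists_ext k F₀ hF₀rank
      (by rw [hk]; exact Submodule.finrank_mono le_top |>.trans (by rw [finrank_top]))
    refine h F' hF'rank ?_
    have hF₀le : F₀ ≤ F' ⊓ Submodule.map J F' := by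
      intro y hy
      refine ⟨hF₀F' hy, ?_⟩
      refine ⟨-(J y), Submodule.neg_mem _ (hF₀F' (hF₀inv y hy)), ?_⟩
      rw [map_neg, hJ, neg_neg]
    refine lt_of_le_of_ne (le_trans hWF₀ hF₀le) (fun he => hxW ?_)
    rw [he]
    exact hF₀le hxF₀
  · -- codimension ≤ 1 implies maximality
    intro h F' hF' hcon
    have hWeven : Even (finrank ℂ (F ⊓ Submodule.map J F : Submodule ℂ V)) :=
      even_finrank_inv J hJ _ (hinv F)
    have hW'even : Even (finrank ℂ (F' ⊓ Submodule.map J F' : Submodule ℂ V)) :=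
      even_finrank_inv J hJ _ (hinv F')
    have h1 : finrank ℂ (F ⊓ Submodule.map J F : Submodule ℂ V)
        < finrank ℂ (F' ⊓ Submodule.map J F' : Submodule ℂ V) :=
      Submodule.finrank_lt_finrank_of_lt hcon
    have h2 : finrank ℂ (F' ⊓ Submodule.map J F' : Submodule ℂ V) ≤ finrank ℂ F' :=
      Submodule.finrank_mono inf_le_left
    obtain ⟨r, hr⟩ := hWeven
    obtain ⟨s, hs⟩ := hW'even
    omega
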